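/- arXiv:2002.04466 — 7 statements merged into one kernel-verified Lean document; each statement's English description precedes it below -/
import Mathlib

section
/- Let R be a commutative k-algebra and λ ∈ k. Define on the set R^ℕ of sequences the λ-Hurwitz product (fg)_n = Σ_{k=0}^{n} Σ_{j=0}^{n-k} C(n,k) C(n-k,j) λ^k f_{n-j} g_{k+j}. Then R^ℕ with pointwise addition and this product is a commutative k-algebra with identity the sequence (1,0,0,...). -/
open Finset

/-- The λ-Hurwitz product on sequences. -/
def hmul {K R : Type*} [CommRing K] [CommRing R] [Algebra K R] (lam : K) (f g : ℕ → R) :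
    ℕ → R :=
  fun n => ∑ i ∈ range (n + 1), ∑ j ∈ range (n - i + 1),
    (n.choose i * (n - i).choose j) • (lam ^ i • (f (n - j) * g (i + j)))

/-- The sequence (1,0,0,...). -/
def hone {R : Type*} [CommRing R] : ℕ → R := fun n => if n = 0 then 1 else 0

/-! ### Auxiliary combinatorics: the covering-pair coefficient `HWN` -/

/-- `HWN n a b` is the number of pairs of subsets `(A, B)` of an `n`-set with
`|A| = a`, `|B| = b`, `A ∪ B` the whole set. -/
def HWN (n a b : ℕ) : ℕ :=
  if a ≤ n ∧ b ≤ n ∧ n ≤ a + b then n.choose a * a.choose (a + b - n) else 0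

lemma HWN_zero (a b : ℕ) : HWN 0 a b = if a = 0 ∧ b = 0 then 1 else 0 := by
  unfold HWN; split_ifs with h1 h2 <;> try omega
  obtain ⟨rfl, rfl⟩ := h2; simp

lemma HWN_succ_zero_zero (n : ℕ) : HWN (n+1) 0 0 = 0 := by
  unfold HWN; split_ifs with h <;> first | rfl | omega

lemma HWN_succ_zero (n b : ℕ) : HWN (n+1) 0 (b+1) = HWN n 0 b := by
  unfold HWN; split_ifs with h1 h2 <;> try omega
  have hb : b = n := by omega
  subst hb; simp

lemma HWN_succ_zero' (n a : ℕ) : HWN (n+1) (a+1) 0 = HWN n a 0 := by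
  unfold HWN; split_ifs with h1 h2 <;> try omega
  have ha : a = n := by omega
  subst ha; simp

lemma HWN_succ (n a b : ℕ) :
    HWN (n+1) (a+1) (b+1) = HWN n a (b+1) + HWN n (a+1) b + HWN n a b := by
  unfold HWN
  split_ifs with h1 h2 h3 h4 h2 h3 h4 h3 h4 h4 <;> try omega
  -- TTT
  · obtain ⟨ha, hb, hn⟩ := h4
    have e1 : a + 1 + (b + 1) - (n + 1) = (a + b - n) + 1 := by omega
    have e2 : a + (b + 1) - n = (a + b - n) + 1 := by omega
    have e3 : a + 1 + b - n = (a + b - n) + 1 := by omega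
    rw [e1, e2, e3, Nat.choose_succ_succ n a, Nat.choose_succ_succ a (a + b - n)]
    ring
  -- TTF: n = a+b+1
  · have hn : n = a + b + 1 := by omega
    have e1 : a + 1 + (b + 1) - (n + 1) = 0 := by omega
    have e2 : a + (b + 1) - n = 0 := by omega
    have e3 : a + 1 + b - n = 0 := by omega
    rw [e1, e2, e3, Nat.choose_succ_succ n a]
    simp [mul_comm]
  -- TFT: a = n
  · have ha : a = n := by omega
    subst ha
    have e1 : a + 1 + (b + 1) - (a + 1) = b + 1 := by omega
    have e2 : a + (b + 1) - a = b + 1 := by omega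
    have e3 : a + b - a = b := by omega
    rw [e1, e2, e3, Nat.choose_succ_succ a b]
    simp [mul_comm]
    omega
  -- FTT: b = n
  · have hb : b = n := by omega
    subst hb
    have e1 : a + 1 + (b + 1) - (b + 1) = a + 1 := by omega
    have e3 : a + 1 + b - b = a + 1 := by omega
    have e4 : a + b - b = a := by omega
    rw [e1, e3, e4, Nat.choose_succ_succ b a]
    simp [mul_comm]
    omega
  -- FFT: a = b = n
  · have ha : a = n := by omega
    subst ha
    have hb : b = a := by omega
    subst hb
    have e1 : b + 1 + (b + 1) - (b + 1) = b + 1 := by omega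
    have e4 : b + b - b = b := by omega
    rw [e1, e4]
    simp

/-- The key binomial identity: `∑ₙ C(m,n)·HWN n a b = C(m,a)·C(m,b)`. -/
lemma HWN_sum (m : ℕ) : ∀ a b : ℕ,
    ∑ n ∈ range (m + 1), m.choose n * HWN n a b = m.choose a * m.choose b := by
  induction m with
  | zero =>
    intro a b
    simp [HWN_zero]
    rcases a with _ | a <;> rcases b with _ | b <;> simp
  | succ m ih =>
    intro a b
    have step : ∑ n ∈ range (m + 1), m.choose n * HWN (n+1) a b + m.choose a * m.choose b
        = (m+1).choose a * (m+1).choose b := by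
      rcases a with _ | a <;> rcases b with _ | b
      · simp [HWN_succ_zero_zero]
      · simp only [HWN_succ_zero, ih]
        simp [Nat.choose_succ_succ]
      · simp only [HWN_succ_zero', ih]
        simp [Nat.choose_succ_succ]
      · simp only [HWN_succ, Nat.mul_add, sum_add_distrib, ih]
        rw [Nat.choose_succ_succ m a, Nat.choose_succ_succ m b]
        ring
    have h2 : ∑ n ∈ range (m + 2), m.choose n * HWN n a b
        = ∑ n ∈ range (m + 1), m.choose n * HWN n a b := by
      rw [sum_range_succ, Nat.choose_succ_self, zero_mul, add_zero]
    calc ∑ n ∈ range (m + 2), (m+1).choose n * HWN n a b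
        = ∑ n ∈ range (m + 1), (m+1).choose (n+1) * HWN (n+1) a b
            + (m+1).choose 0 * HWN 0 a b := sum_range_succ' _ (m+1)
      _ = ∑ n ∈ range (m + 1), (m.choose n * HWN (n+1) a b + m.choose (n+1) * HWN (n+1) a b)
            + HWN 0 a b := by
          simp [Nat.choose_succ_succ, Nat.add_mul]
      _ = ∑ n ∈ range (m + 1), m.choose n * HWN (n+1) a b
            + (∑ n ∈ range (m + 1), m.choose (n+1) * HWN (n+1) a b + m.choose 0 * HWN 0 a b) := by
          rw [sum_add_distrib]; simp; ring
      _ = ∑ n ∈ range (m + 1), m.choose n * HWN (n+1) a b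
            + ∑ n ∈ range (m + 2), m.choose n * HWN n a b := by
          rw [← sum_range_succ' (fun n => m.choose n * HWN n a b) (m+1)]
      _ = ∑ n ∈ range (m + 1), m.choose n * HWN (n+1) a b
            + ∑ n ∈ range (m + 1), m.choose n * HWN n a b := by rw [h2]
      _ = ∑ n ∈ range (m + 1), m.choose n * HWN (n+1) a b
            + m.choose a * m.choose b := by rw [ih]
      _ = (m+1).choose a * (m+1).choose b := step

lemma HWN_apply {n i j : ℕ} (h1 : i ≤ n) (h2 : j ≤ n - i) :
    HWN n (n - j) (i + j) = n.choose i * (n - i).choose j := by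
  have hij : i + j ≤ n := by omega
  unfold HWN
  rw [if_pos (by omega)]
  have e1 : n - j + (i + j) - n = i := by omega
  rw [e1]
  rw [Nat.choose_mul (by omega : i ≤ n - j)]
  congr 1
  rw [show n - j - i = n - i - j from by omega]
  exact Nat.choose_symm h2

lemma HWN_eq_zero_left {n a b : ℕ} (h : n < a) : HWN n a b = 0 := if_neg (by omega)
lemma HWN_eq_zero_right {n a b : ℕ} (h : n < b) : HWN n a b = 0 := if_neg (by omega)

/-- Symmetric form of the λ-Hurwitz product. -/
lemma hmul_eq {R : Type*} [CommRing R] (μ : R) (f g : ℕ → R) (n : ℕ) :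
    hmul (K := R) μ f g n
      = ∑ a ∈ range (n + 1), ∑ b ∈ range (n + 1),
          HWN n a b • (μ ^ (a + b - n) * (f a * g b)) := by
  rw [hmul, Finset.sum_sigma', Finset.sum_sigma']
  conv_rhs => rw [← Finset.sum_filter_of_ne
    (p := fun x : Σ _ : ℕ, ℕ => n ≤ x.1 + x.2)
    (fun x hx hne => by
      by_contra hc
      apply hne
      rw [show HWN n x.1 x.2 = 0 from if_neg (by omega), zero_smul])]
  refine Finset.sum_nbij' (fun x => ⟨n - x.2, x.1 + x.2⟩) (fun y => ⟨y.1 + y.2 - n, n - y.1⟩)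
    ?_ ?_ ?_ ?_ ?_
  · intro x hx
    simp only [mem_sigma, mem_range] at hx
    simp only [mem_filter, mem_sigma, mem_range]
    omega
  · intro y hy
    simp only [mem_filter, mem_sigma, mem_range] at hy
    simp only [mem_sigma, mem_range]
    omega
  · intro x hx
    simp only [mem_sigma, mem_range] at hx
    have h1 : x.1 ≤ n := by omega
    have h2 : x.2 ≤ n - x.1 := by omega
    ext <;> simp <;> omega
  · intro y hy
    simp only [mem_filter, mem_sigma, mem_range] at hy
    ext <;> simp <;> omega
  · intro x hx
    simp only [mem_sigma, mem_range] at hx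
    have h1 : x.1 ≤ n := by omega
    have h2 : x.2 ≤ n - x.1 := by omega
    rw [HWN_apply h1 h2]
    rw [show n - x.2 + (x.1 + x.2) - n = x.1 from by omega]
    rw [smul_eq_mul]

/-! ### The evaluation homomorphism -/

/-- Evaluation of a λ-Hurwitz series, `HE μ f m = ∑ₙ C(m,n) μⁿ f n`. -/
def HE {R : Type*} [CommRing R] (μ : R) (f : ℕ → R) : ℕ → R :=
  fun m => ∑ n ∈ range (m + 1), m.choose n • (μ ^ n * f n)

lemma HE_mul {R : Type*} [CommRing R] (μ : R) (f g : ℕ → R) (m : ℕ) :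
    HE μ (hmul (K := R) μ f g) m = HE μ f m * HE μ g m := by
  unfold HE
  calc ∑ n ∈ range (m + 1), m.choose n • (μ ^ n * hmul (K := R) μ f g n)
      = ∑ n ∈ range (m + 1), ∑ a ∈ range (m + 1), ∑ b ∈ range (m + 1),
          (m.choose n * HWN n a b) • (μ ^ (n + (a + b - n)) * (f a * g b)) := by
        refine sum_congr rfl fun n hn => ?_
        simp only [mem_range] at hn
        rw [hmul_eq]
        rw [sum_subset (range_subset_range.mpr (by omega : n + 1 ≤ m + 1))
          (fun a _ ha => by
            rw [sum_eq_zero]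
            intro b _
            rw [HWN_eq_zero_left (by simp only [mem_range] at ha ⊢; omega), zero_smul])]
        rw [Finset.mul_sum, Finset.smul_sum]
        refine sum_congr rfl fun a _ => ?_
        rw [sum_subset (range_subset_range.mpr (by omega : n + 1 ≤ m + 1))
          (fun b _ hb => by
            rw [HWN_eq_zero_right (by simp only [mem_range] at hb ⊢; omega), zero_smul])]
        rw [Finset.mul_sum, Finset.smul_sum]
        refine sum_congr rfl fun b _ => ?_
        rw [mul_smul_comm, ← mul_assoc, ← pow_add, mul_smul]
    _ = ∑ a ∈ range (m + 1), ∑ b ∈ range (m + 1),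
          (∑ n ∈ range (m + 1), m.choose n * HWN n a b) • (μ ^ (a + b) * (f a * g b)) := by
        rw [sum_comm]
        refine sum_congr rfl fun a _ => ?_
        rw [sum_comm]
        refine sum_congr rfl fun b _ => ?_
        rw [sum_smul]
        refine sum_congr rfl fun n _ => ?_
        rcases le_or_gt n (a + b) with h | h
        · rw [show n + (a + b - n) = a + b from by omega]
        · rw [show HWN n a b = 0 from if_neg (by omega)]
          simp
    _ = ∑ a ∈ range (m + 1), ∑ b ∈ range (m + 1),
          (m.choose a * m.choose b) • (μ ^ (a + b) * (f a * g b)) := by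
        refine sum_congr rfl fun a _ => sum_congr rfl fun b _ => ?_
        rw [HWN_sum]
    _ = (∑ n ∈ range (m + 1), m.choose n • (μ ^ n * f n))
          * ∑ n ∈ range (m + 1), m.choose n • (μ ^ n * g n) := by
        rw [sum_mul_sum]
        refine sum_congr rfl fun a _ => sum_congr rfl fun b _ => ?_
        simp only [nsmul_eq_mul, Nat.cast_mul]
        rw [pow_add]
        ring

lemma HE_cancel {R : Type*} [CommRing R] {μ : R} (hreg : ∀ x : R, μ * x = 0 → x = 0)
    {f g : ℕ → R} (h : ∀ m, HE μ f m = HE μ g m) : f = g := by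
  have h4 : ∀ (k : ℕ) (x : R), μ ^ k * x = 0 → x = 0 := by
    intro k
    induction k with
    | zero => intro x hx; simpa using hx
    | succ k ihk =>
      intro x hx
      rw [pow_succ, mul_assoc] at hx
      exact hreg x (ihk _ hx)
  funext m
  induction m using Nat.strong_induction_on with
  | _ m ih =>
    have hm := h m
    unfold HE at hm
    rw [sum_range_succ, sum_range_succ] at hm
    rw [sum_congr rfl (fun n hn => by rw [ih n (mem_range.mp hn)] :
      ∀ n ∈ range m, m.choose n • (μ ^ n * f n) = m.choose n • (μ ^ n * g n))] at hm
    have h2 : μ ^ m * f m = μ ^ m * g m := by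
      have := add_left_cancel hm
      simpa using this
    have h3 : μ ^ m * (f m - g m) = 0 := by rw [mul_sub, h2, sub_self]
    exact sub_eq_zero.mp (h4 m _ h3)

/-! ### Transfer from the universal polynomial ring -/

abbrev UPoly := MvPolynomial (Option (Fin 3 × ℕ)) ℤ

lemma ureg : ∀ x : UPoly, (MvPolynomial.X none) * x = 0 → x = 0 := by
  intro x hx
  rcases mul_eq_zero.mp hx with h | h
  · exact absurd h (MvPolynomial.X_ne_zero _)
  · exact h

lemma assoc_univ (F G H : ℕ → UPoly) :
    hmul (K := UPoly) (MvPolynomial.X none) (hmul (K := UPoly) (MvPolynomial.X none) F G) H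
      = hmul (K := UPoly) (MvPolynomial.X none) F (hmul (K := UPoly) (MvPolynomial.X none) G H) := by
  apply HE_cancel ureg
  intro m
  rw [HE_mul, HE_mul, HE_mul, HE_mul, mul_assoc]

lemma map_hmul {R S : Type*} [CommRing R] [CommRing S] (φ : R →+* S) (μ : R) (f g : ℕ → R)
    (n : ℕ) :
    φ (hmul (K := R) μ f g n) = hmul (K := S) (φ μ) (fun a => φ (f a)) (fun a => φ (g a)) n := by
  unfold hmul
  rw [map_sum]
  refine sum_congr rfl fun i _ => ?_
  rw [map_sum]
  refine sum_congr rfl fun j _ => ?_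
  rw [map_nsmul, smul_eq_mul, smul_eq_mul, map_mul, map_pow, map_mul]

lemma hmul_algebra {K R : Type*} [CommRing K] [CommRing R] [Algebra K R] (lam : K)
    (f g : ℕ → R) : hmul lam f g = hmul (K := R) (algebraMap K R lam) f g := by
  funext n
  unfold hmul
  refine sum_congr rfl fun i _ => sum_congr rfl fun j _ => ?_
  congr 1
  rw [Algebra.smul_def, map_pow, smul_eq_mul]

theorem hmul_assoc {K R : Type*} [CommRing K] [CommRing R] [Algebra K R] (lam : K)
    (f g h : ℕ → R) : hmul lam (hmul lam f g) h = hmul lam f (hmul lam g h) := by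
  set μ : R := algebraMap K R lam with hμdef
  let v : Option (Fin 3 × ℕ) → R := fun o => match o with
    | none => μ
    | some p => if p.1 = 0 then f p.2 else if p.1 = 1 then g p.2 else h p.2
  let φ : UPoly →+* R := MvPolynomial.eval₂Hom (Int.castRingHom R) v
  let F : ℕ → UPoly := fun a => MvPolynomial.X (some (0, a))
  let G : ℕ → UPoly := fun a => MvPolynomial.X (some (1, a))
  let H : ℕ → UPoly := fun a => MvPolynomial.X (some (2, a))
  have hF : (fun a => φ (F a)) = f := by funext a; simp [φ, F, v]
  have hG : (fun a => φ (G a)) = g := by funext a; simp [φ, G, v]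
  have hH : (fun a => φ (H a)) = h := by funext a; simp [φ, H, v]
  have hX : φ (MvPolynomial.X none) = μ := by simp [φ, v]
  have hFG : (fun a => φ (hmul (K := UPoly) (MvPolynomial.X none) F G a))
      = hmul (K := R) μ f g := by
    funext a
    rw [map_hmul, hX, hF, hG]
  have hGH : (fun a => φ (hmul (K := UPoly) (MvPolynomial.X none) G H a))
      = hmul (K := R) μ g h := by
    funext a
    rw [map_hmul, hX, hG, hH]
  rw [hmul_algebra lam (hmul lam f g) h, hmul_algebra lam f g,
      hmul_algebra lam f (hmul lam g h), hmul_algebra lam g h, ← hμdef]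
  funext n
  have key := congrArg (fun t => φ (t n)) (assoc_univ F G H)
  rw [map_hmul, map_hmul, hX, hF, hH, hFG, hGH] at key
  exact key

/-! ### The remaining ring laws -/

lemma hmul_comm {K R : Type*} [CommRing K] [CommRing R] [Algebra K R] (lam : K) (f g : ℕ → R) :
    hmul lam f g = hmul lam g f := by
  funext n
  unfold hmul
  refine sum_congr rfl fun i hi => ?_
  rw [← sum_range_reflect]
  refine sum_congr rfl fun j hj => ?_
  simp only [mem_range] at hi hj
  have h2 : j ≤ n - i := by omega
  rw [show n - i + 1 - 1 - j = n - i - j from by omega,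
      show n - (n - i - j) = i + j from by omega,
      show i + (n - i - j) = n - j from by omega,
      Nat.choose_symm h2, mul_comm (f (i + j)) (g (n - j))]

lemma hone_hmul {K R : Type*} [CommRing K] [CommRing R] [Algebra K R] (lam : K) (f : ℕ → R) :
    hmul lam hone f = f := by
  funext n
  unfold hmul
  rw [Finset.sum_eq_single 0]
  · rw [Finset.sum_eq_single n]
    · simp [hone]
    · intro j hj hne
      simp only [mem_range] at hj
      have : n - j ≠ 0 := by omega
      simp [hone, this]
    · intro hn
      exact absurd (mem_range.mpr (by omega)) hn
  · intro i hi hne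
    rw [sum_eq_zero]
    intro j hj
    simp only [mem_range] at hi hj
    have : n - j ≠ 0 := by omega
    simp [hone, this]
  · intro hn
    exact absurd (mem_range.mpr (by omega)) hn

lemma hmul_add {K R : Type*} [CommRing K] [CommRing R] [Algebra K R] (lam : K)
    (f g h : ℕ → R) : hmul lam f (g + h) = hmul lam f g + hmul lam f h := by
  funext n
  simp only [hmul, Pi.add_apply]
  rw [← sum_add_distrib]
  refine sum_congr rfl fun i _ => ?_
  rw [← sum_add_distrib]
  refine sum_congr rfl fun j _ => ?_
  rw [mul_add, smul_add, smul_add]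

lemma hmul_smul {K R : Type*} [CommRing K] [CommRing R] [Algebra K R] (lam : K) (c : K)
    (f g : ℕ → R) : hmul lam (c • f) g = c • hmul lam f g := by
  funext n
  simp only [hmul, Pi.smul_apply]
  rw [Finset.smul_sum]
  refine sum_congr rfl fun i _ => ?_
  rw [Finset.smul_sum]
  refine sum_congr rfl fun j _ => ?_
  rw [smul_mul_assoc, smul_comm (lam ^ i) c, smul_comm (n.choose i * (n - i).choose j) c]

/-- R^ℕ with pointwise addition and the λ-Hurwitz product is a commutative
K-algebra with identity (1,0,0,...). -/
theorem stmt0 {K R : Type*} [CommRing K] [CommRing R] [Algebra K R] (lam : K) :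
    (∀ f g : ℕ → R, hmul lam f g = hmul lam g f) ∧
    (∀ f g h : ℕ → R, hmul lam (hmul lam f g) h = hmul lam f (hmul lam g h)) ∧
    (∀ f g h : ℕ → R, hmul lam f (g + h) = hmul lam f g + hmul lam f h) ∧
    (∀ f g h : ℕ → R, hmul lam (f + g) h = hmul lam f h + hmul lam g h) ∧
    (∀ f : ℕ → R, hmul lam hone f = f) ∧
    (∀ f : ℕ → R, hmul lam f hone = f) ∧
    (∀ (c : K) (f g : ℕ → R), hmul lam (c • f) g = c • hmul lam f g) ∧
    (∀ (c : K) (f g : ℕ → R), hmul lam f (c • g) = c • hmul lam f g) := by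
  refine ⟨hmul_comm lam, hmul_assoc lam, hmul_add lam, ?_, hone_hmul lam, ?_, hmul_smul lam, ?_⟩
  · intro f g h
    rw [hmul_comm lam (f + g) h, hmul_add, hmul_comm lam h f, hmul_comm lam h g]
  · intro f
    rw [hmul_comm]
    exact hone_hmul lam f
  · intro c f g
    rw [hmul_comm lam f (c • g), hmul_smul, hmul_comm]
end

section
/- Let A be the free k-module with basis {z_i : i ∈ ℕ} and multiplication determined by z_m z_n = Σ_{j=0}^{m} C(m+n-j, n) C(n, j) λ^j z_{m+n-j}, extended bilinearly. Then A is a commutative k-algebra with identity z_0, and the operator P defined by P(z_i) = z_{i+1} is a Rota-Baxter operator of weight λ on A, i.e., P(u)P(v) = P(P(u)v) + P(uP(v)) + λP(uv) for all u, v ∈ A. -/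
open Finset

/-- The multiplication on the free K-module with basis {z_i : i ∈ ℕ} determined by
z_m z_n = Σ_{j=0}^{m} C(m+n-j, n) C(n, j) λ^j z_{m+n-j}, extended bilinearly. -/
noncomputable def zmul {K : Type*} [CommRing K] (lam : K) (u v : ℕ →₀ K) : ℕ →₀ K :=
  u.sum fun m a => v.sum fun n b =>
    ∑ j ∈ range (m + 1),
      ((m + n - j).choose n * n.choose j) • Finsupp.single (m + n - j) (a * b * lam ^ j)

/-- The shift operator P(z_i) = z_{i+1}. -/
noncomputable def shiftP {K : Type*} [CommRing K] (u : ℕ →₀ K) : ℕ →₀ K :=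
  Finsupp.mapDomain (· + 1) u

open Finset

/-- structure constant -/
def Tc (m n j : ℕ) : ℕ := (m + n - j).choose n * n.choose j

lemma Tzero {m j : ℕ} (n : ℕ) (h : m < j) : Tc m n j = 0 := by
  unfold Tc
  rcases le_or_gt j n with hjn | hjn
  · rw [Nat.choose_eq_zero_of_lt (by omega), zero_mul]
  · rw [Nat.choose_eq_zero_of_lt hjn, mul_zero]

lemma Tzero' {n j : ℕ} (m : ℕ) (h : n < j) : Tc m n j = 0 := by
  unfold Tc; rw [Nat.choose_eq_zero_of_lt h, mul_zero]

lemma termwise {x m n j : ℕ} (hjm : j ≤ m) (hjn : j ≤ n) (hmx : m ≤ x) :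
    x.choose m * (m.choose j * (x - m).choose (n - j)) = Tc m n j * x.choose (m + n - j) := by
  unfold Tc
  rcases le_or_gt (m + n - j) x with hx | hx
  · have h1 : n ≤ m + n - j := by omega
    have h2 : n - j ≤ x - m := by omega
    have key : ((x.choose m : ℚ) * (m.choose j * (x - m).choose (n - j))) =
        ((m + n - j).choose n * n.choose j * x.choose (m + n - j)) := by
      rw [Nat.cast_choose ℚ hmx, Nat.cast_choose ℚ hjm, Nat.cast_choose ℚ h2,
        Nat.cast_choose ℚ h1, Nat.cast_choose ℚ hjn, Nat.cast_choose ℚ hx]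
      rw [show m + n - j - n = m - j by omega, show x - (m + n - j) = x - m - (n - j) by omega]
      have hne : ∀ t : ℕ, (t.factorial : ℚ) ≠ 0 := fun t => Nat.cast_ne_zero.2 (Nat.factorial_ne_zero t)
      field_simp
    exact_mod_cast key
  · rw [Nat.choose_eq_zero_of_lt (show x - m < n - j by omega),
      Nat.choose_eq_zero_of_lt hx]
    simp

/-- trinomial revision -/
lemma chooseC (x m n : ℕ) :
    x.choose m * x.choose n = ∑ j ∈ range (m + 1), Tc m n j * x.choose (m + n - j) := by
  rcases le_or_gt m x with hmx | hmx
  · have hv : x.choose n = ∑ j ∈ range (n + 1), m.choose j * (x - m).choose (n - j) := by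
      conv_lhs => rw [show x = m + (x - m) by omega]
      rw [Nat.add_choose_eq, Finset.Nat.sum_antidiagonal_eq_sum_range_succ_mk]
    rw [hv, Finset.mul_sum]
    have hle : min m n + 1 ≤ n + 1 := by omega
    have hle' : min m n + 1 ≤ m + 1 := by omega
    rw [← Finset.sum_subset (Finset.range_subset_range.2 hle) (fun j hj hj' => by
        rw [Nat.choose_eq_zero_of_lt (show m < j by simp at hj hj'; omega), zero_mul, mul_zero]),
      ← Finset.sum_subset (Finset.range_subset_range.2 hle') (fun j hj hj' => by
        rw [Tzero' m (show n < j by simp at hj hj'; omega), zero_mul])]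
    refine Finset.sum_congr rfl fun j hj => ?_
    simp only [mem_range] at hj
    exact termwise (by omega) (by omega) hmx
  · rw [Nat.choose_eq_zero_of_lt hmx, zero_mul]
    refine (Finset.sum_eq_zero fun j hj => ?_).symm
    simp only [mem_range] at hj
    rcases le_or_gt j n with hjn | hjn
    · rw [Nat.choose_eq_zero_of_lt (show x < m + n - j by omega), mul_zero]
    · rw [Tzero' m hjn, zero_mul]

lemma extract (M : ℕ) (L R : ℕ → ℕ)
    (h : ∀ x : ℕ, ∑ k ∈ range (M + 1), L k * x.choose (M - k)
      = ∑ k ∈ range (M + 1), R k * x.choose (M - k)) :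
    ∀ k, k ≤ M → L k = R k := by
  have main : ∀ s, s ≤ M → L (M - s) = R (M - s) := by
    intro s
    induction s using Nat.strong_induction_on with
    | _ s ih =>
      intro hs
      have hmem : M - s ∈ range (M + 1) := by simp
      have h1 := h s
      rw [← Finset.add_sum_erase _ _ hmem, ← Finset.add_sum_erase _ _ hmem] at h1
      have heq : ∑ k ∈ (range (M + 1)).erase (M - s), L k * s.choose (M - k)
          = ∑ k ∈ (range (M + 1)).erase (M - s), R k * s.choose (M - k) := by
        refine Finset.sum_congr rfl fun k hk => ?_
        simp only [Finset.mem_erase, Finset.mem_range] at hk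
        rcases lt_or_gt_of_ne hk.1 with hlt | hgt
        · rw [Nat.choose_eq_zero_of_lt (show s < M - k by omega), mul_zero, mul_zero]
        · have := ih (M - k) (by omega) (by omega)
          rw [show M - (M - k) = k by omega] at this
          rw [this]
      rw [heq, show M - (M - s) = s by omega, Nat.choose_self] at h1
      omega
  intro k hk
  have := main (M - k) (by omega)
  rwa [show M - (M - k) = k by omega] at this
section Regroup
open Finset
variable {V : Type*} [AddCommMonoid V]

lemma regroup (M : ℕ) (c : ℕ → ℕ → ℕ) (hc : ∀ j i, M < j + i → c j i = 0) (g : ℕ → V) :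
    ∑ j ∈ range (M + 1), ∑ i ∈ range (M + 1), c j i • g (j + i)
      = ∑ k ∈ range (M + 1), (∑ j ∈ range (k + 1), c j (k - j)) • g k := by
  have hrhs : ∀ k : ℕ, (∑ j ∈ range (k + 1), c j (k - j)) • g k
      = ∑ j ∈ range (k + 1), c j (k - j) • g k := fun k => Finset.sum_smul
  simp only [hrhs]
  rw [Finset.sum_sigma' (range (M + 1)) (fun k => range (k + 1))
    (fun k j => c j (k - j) • g k)]
  rw [← Finset.sum_product' (s := range (M + 1)) (t := range (M + 1))
    (f := fun j i => c j i • g (j + i))]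
  rw [← Finset.sum_filter_of_ne (p := fun x : ℕ × ℕ => x.1 + x.2 ≤ M)
    (fun x _ hne => by by_contra hgt; exact hne (by rw [hc x.1 x.2 (by omega), zero_smul]))]
  refine Finset.sum_nbij' (i := fun x : ℕ × ℕ => (⟨x.1 + x.2, x.1⟩ : Σ _ : ℕ, ℕ))
    (j := fun y : Σ _ : ℕ, ℕ => (y.2, y.1 - y.2)) ?_ ?_ ?_ ?_ ?_
  · intro a ha
    simp only [Finset.mem_filter, Finset.mem_product, mem_range] at ha
    simp only [Finset.mem_sigma, mem_range]
    omega
  · intro a ha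
    simp only [Finset.mem_sigma, mem_range] at ha
    simp only [Finset.mem_filter, Finset.mem_product, mem_range]
    omega
  · intro a ha
    obtain ⟨j, i⟩ := a
    simp only [Prod.mk.injEq]
    exact ⟨trivial, by omega⟩
  · intro a ha
    obtain ⟨k, j⟩ := a
    simp only [Finset.mem_sigma, mem_range] at ha
    dsimp only
    rw [show j + (k - j) = k by omega]
  · intro a ha
    simp only [Finset.mem_filter, Finset.mem_product, mem_range] at ha
    rw [show a.1 + a.2 - a.1 = a.2 by omega]

lemma HL (m n p : ℕ) (g : ℕ → V) :
    ∑ j ∈ range (m + 1), ∑ i ∈ range (m + n - j + 1),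
        (Tc m n j * Tc (m + n - j) p i) • g (j + i)
      = ∑ k ∈ range (m + n + p + 1),
          (∑ j ∈ range (k + 1), Tc m n j * Tc (m + n - j) p (k - j)) • g k := by
  have step1 : ∀ j ∈ range (m + 1),
      ∑ i ∈ range (m + n - j + 1), (Tc m n j * Tc (m + n - j) p i) • g (j + i)
        = ∑ i ∈ range (m + n + p + 1), (Tc m n j * Tc (m + n - j) p i) • g (j + i) := by
    intro j _
    refine Finset.sum_subset (Finset.range_subset_range.2 (by omega)) fun i _ hi => ?_
    rw [Tzero p (show m + n - j < i by simp at hi; omega), mul_zero, zero_smul]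
  rw [Finset.sum_congr rfl step1,
    Finset.sum_subset (Finset.range_subset_range.2 (show m + 1 ≤ m + n + p + 1 by omega))
      (fun j _ hj => Finset.sum_eq_zero fun i _ => by
        rw [Tzero n (show m < j by simp at hj; omega), zero_mul, zero_smul])]
  refine regroup (m + n + p) _ (fun j i hji => ?_) g
  rcases le_or_gt j m with hj | hj
  · rw [Tzero' (m + n - j) (show p < i by omega), mul_zero]
  · rw [Tzero n hj, zero_mul]

lemma HR (m n p : ℕ) (g : ℕ → V) :
    ∑ j ∈ range (n + 1), ∑ i ∈ range (m + 1),
        (Tc n p j * Tc m (n + p - j) i) • g (j + i)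
      = ∑ k ∈ range (m + n + p + 1),
          (∑ j ∈ range (k + 1), Tc n p j * Tc m (n + p - j) (k - j)) • g k := by
  have step1 : ∀ j ∈ range (n + 1),
      ∑ i ∈ range (m + 1), (Tc n p j * Tc m (n + p - j) i) • g (j + i)
        = ∑ i ∈ range (m + n + p + 1), (Tc n p j * Tc m (n + p - j) i) • g (j + i) := by
    intro j _
    refine Finset.sum_subset (Finset.range_subset_range.2 (by omega)) fun i _ hi => ?_
    rw [Tzero (n + p - j) (show m < i by simp at hi; omega), mul_zero, zero_smul]
  rw [Finset.sum_congr rfl step1,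
    Finset.sum_subset (Finset.range_subset_range.2 (show n + 1 ≤ m + n + p + 1 by omega))
      (fun j _ hj => Finset.sum_eq_zero fun i _ => by
        rw [Tzero p (show n < j by simp at hj; omega), zero_mul, zero_smul])]
  refine regroup (m + n + p) _ (fun j i hji => ?_) g
  rcases le_or_gt j n with hj | hj
  · rw [Tzero (n + p - j) (show m < i by omega), mul_zero]
  · rw [Tzero p hj, zero_mul]

end Regroup

open Finset in
lemma coeffId (m n p k : ℕ) (hk : k ≤ m + n + p) :
    ∑ j ∈ range (k + 1), Tc m n j * Tc (m + n - j) p (k - j)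
      = ∑ j ∈ range (k + 1), Tc n p j * Tc m (n + p - j) (k - j) := by
  refine extract (m + n + p)
    (fun k => ∑ j ∈ range (k + 1), Tc m n j * Tc (m + n - j) p (k - j))
    (fun k => ∑ j ∈ range (k + 1), Tc n p j * Tc m (n + p - j) (k - j))
    (fun x => ?_) k hk
  have chainL : x.choose m * x.choose n * x.choose p
      = ∑ j ∈ range (m + 1), ∑ i ∈ range (m + n - j + 1),
          (Tc m n j * Tc (m + n - j) p i) • x.choose (m + n + p - (j + i)) := by
    rw [chooseC x m n, Finset.sum_mul]
    refine Finset.sum_congr rfl fun j hj => ?_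
    rw [mul_assoc, chooseC x (m + n - j) p, Finset.mul_sum]
    refine Finset.sum_congr rfl fun i hi => ?_
    simp only [mem_range] at hj hi
    rw [smul_eq_mul, show m + n - j + p - i = m + n + p - (j + i) by omega, mul_assoc]
  have chainR : x.choose m * x.choose n * x.choose p
      = ∑ j ∈ range (n + 1), ∑ i ∈ range (m + 1),
          (Tc n p j * Tc m (n + p - j) i) • x.choose (m + n + p - (j + i)) := by
    rw [mul_assoc, chooseC x n p, Finset.mul_sum]
    refine Finset.sum_congr rfl fun j hj => ?_
    rw [mul_left_comm (x.choose m) (Tc n p j), chooseC x m (n + p - j), Finset.mul_sum]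
    refine Finset.sum_congr rfl fun i hi => ?_
    simp only [mem_range] at hj hi
    rw [smul_eq_mul, show m + (n + p - j) - i = m + n + p - (j + i) by omega, mul_assoc]
  have eL := chainL.trans (HL m n p (fun k => x.choose (m + n + p - k)))
  have eR := chainR.trans (HR m n p (fun k => x.choose (m + n + p - k)))
  have := eL.symm.trans eR
  simpa only [smul_eq_mul] using this
open Finset in
lemma Tsym (m n : ℕ) : ∀ j, j ≤ m + n → Tc m n j = Tc n m j := by
  refine extract (m + n) (Tc m n) (Tc n m) (fun x => ?_)
  have h1 : x.choose m * x.choose n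
      = ∑ k ∈ range (m + n + 1), Tc m n k * x.choose (m + n - k) :=
    (chooseC x m n).trans (Finset.sum_subset (Finset.range_subset_range.2 (by omega))
      (fun k _ hk => by rw [Tzero n (show m < k by simp at hk; omega), zero_mul]))
  have h2 : x.choose n * x.choose m
      = ∑ k ∈ range (n + m + 1), Tc n m k * x.choose (n + m - k) :=
    (chooseC x n m).trans (Finset.sum_subset (Finset.range_subset_range.2 (by omega))
      (fun k _ hk => by rw [Tzero m (show n < k by simp at hk; omega), zero_mul]))
  rw [Nat.add_comm n m] at h2
  rw [← h1, ← h2, mul_comm]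

lemma Trec (m n j : ℕ) (hj : j ≤ m) :
    Tc (m + 1) (n + 1) (j + 1) = Tc (m + 1) n (j + 1) + Tc m (n + 1) (j + 1) + Tc m n j := by
  unfold Tc
  rw [show m + 1 + (n + 1) - (j + 1) = (m + n - j) + 1 by omega,
    show m + 1 + n - (j + 1) = m + n - j by omega,
    show m + (n + 1) - (j + 1) = m + n - j by omega,
    Nat.choose_succ_succ' (m + n - j) n, Nat.choose_succ_succ' n j]
  ring

lemma Trec0 (m n : ℕ) : Tc (m + 1) (n + 1) 0 = Tc (m + 1) n 0 + Tc m (n + 1) 0 := by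
  unfold Tc
  rw [show m + 1 + (n + 1) - 0 = (m + n + 1) + 1 by omega,
    show m + 1 + n - 0 = m + n + 1 by omega, show m + (n + 1) - 0 = m + n + 1 by omega,
    Nat.choose_succ_succ' (m + n + 1) n]
  simp


namespace RBX
section Kpart
open Finset
variable {K : Type*} [CommRing K] (lam : K)

lemma zmul_def (u v : ℕ →₀ K) : zmul lam u v = u.sum fun m a => v.sum fun n b =>
    ∑ j ∈ range (m + 1), Tc m n j • Finsupp.single (m + n - j) (a * b * lam ^ j) := rfl

lemma zero_zmul (v : ℕ →₀ K) : zmul lam 0 v = 0 := by simp [zmul_def]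

lemma zmul_zero (u : ℕ →₀ K) : zmul lam u 0 = 0 := by simp [zmul_def]

lemma add_zmul (u v w : ℕ →₀ K) : zmul lam (u + v) w = zmul lam u w + zmul lam v w := by
  simp only [zmul_def]
  refine Finsupp.sum_add_index' (fun m => by simp) (fun m a₁ a₂ => ?_)
  simp [add_mul, Finsupp.single_add, smul_add, Finset.sum_add_distrib, Finsupp.sum_add]

lemma smul_zmul (c : K) (u v : ℕ →₀ K) : zmul lam (c • u) v = c • zmul lam u v := by
  simp only [zmul_def]
  rw [Finsupp.sum_smul_index (fun m => by simp), Finsupp.smul_sum]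
  refine Finsupp.sum_congr fun m _ => ?_
  rw [Finsupp.smul_sum]
  refine Finsupp.sum_congr fun n _ => ?_
  rw [Finset.smul_sum]
  refine Finset.sum_congr rfl fun j _ => ?_
  simp only [Finsupp.smul_single, nsmul_eq_mul, smul_eq_mul]
  congr 1
  ring

lemma zmul_comm (u v : ℕ →₀ K) : zmul lam u v = zmul lam v u := by
  simp only [zmul_def]
  rw [Finsupp.sum_comm]
  refine Finsupp.sum_congr fun n _ => Finsupp.sum_congr fun m _ => ?_
  rw [Finset.sum_subset (Finset.range_subset_range.2 (show m + 1 ≤ m + n + 1 by omega))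
      (fun j _ hj => by rw [Tzero n (show m < j by simp at hj; omega), zero_smul]),
    Finset.sum_subset (Finset.range_subset_range.2 (show n + 1 ≤ n + m + 1 by omega))
      (fun j _ hj => by rw [Tzero m (show n < j by simp at hj; omega), zero_smul]),
    Nat.add_comm n m]
  refine Finset.sum_congr rfl fun j hj => ?_
  rw [Tsym m n j (by simp at hj; omega), mul_comm (u m) (v n)]

lemma zmul_add (u v w : ℕ →₀ K) : zmul lam u (v + w) = zmul lam u v + zmul lam u w := by
  rw [zmul_comm lam u (v + w), add_zmul, zmul_comm lam v u, zmul_comm lam w u]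

lemma zmul_smul (c : K) (u v : ℕ →₀ K) : zmul lam u (c • v) = c • zmul lam u v := by
  rw [zmul_comm lam u (c • v), smul_zmul, zmul_comm lam v u]

lemma nsmul_zmul (k : ℕ) (u v : ℕ →₀ K) : zmul lam (k • u) v = k • zmul lam u v := by
  induction k with
  | zero => simp [zero_zmul]
  | succ k ih => rw [succ_nsmul, succ_nsmul, add_zmul, ih]

lemma zmul_nsmul (k : ℕ) (u v : ℕ →₀ K) : zmul lam u (k • v) = k • zmul lam u v := by
  rw [zmul_comm lam u (k • v), nsmul_zmul, zmul_comm lam v u]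

lemma zmul_finset_sum {ι : Type*} (s : Finset ι) (f : ι → ℕ →₀ K) (v : ℕ →₀ K) :
    zmul lam (∑ i ∈ s, f i) v = ∑ i ∈ s, zmul lam (f i) v := by
  classical
  induction s using Finset.induction with
  | empty => simp [zero_zmul]
  | insert a s h ih => rw [Finset.sum_insert h, add_zmul, ih, Finset.sum_insert h]

lemma zmul_finset_sum' {ι : Type*} (s : Finset ι) (f : ι → ℕ →₀ K) (v : ℕ →₀ K) :
    zmul lam v (∑ i ∈ s, f i) = ∑ i ∈ s, zmul lam v (f i) := by
  rw [zmul_comm lam v _, zmul_finset_sum]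
  exact Finset.sum_congr rfl fun i _ => zmul_comm lam (f i) v

lemma zmul_single_one (m n : ℕ) :
    zmul lam (Finsupp.single m (1 : K)) (Finsupp.single n 1)
      = ∑ j ∈ range (m + 1), Tc m n j • Finsupp.single (m + n - j) (lam ^ j) := by
  rw [zmul_def, Finsupp.sum_single_index (by simp), Finsupp.sum_single_index (by simp)]
  simp

lemma single_eq (a : ℕ) (x : K) : Finsupp.single a x = x • Finsupp.single a (1 : K) := by
  rw [Finsupp.smul_single, smul_eq_mul, mul_one]

lemma one_zmul (u : ℕ →₀ K) : zmul lam (Finsupp.single 0 1) u = u := by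
  rw [zmul_def, Finsupp.sum_single_index (by simp)]
  have : ∀ n ∈ u.support, ∀ b : K,
      (∑ j ∈ range (0 + 1), Tc 0 n j • Finsupp.single (0 + n - j) (1 * b * lam ^ j))
        = Finsupp.single n b := by
    intro n _ b
    rw [Finset.sum_range_one, show Tc 0 n 0 = 1 by simp [Tc], one_smul, pow_zero, mul_one,
      one_mul, Nat.zero_add, Nat.sub_zero]
  calc u.sum (fun n b => ∑ j ∈ range (0 + 1), Tc 0 n j • Finsupp.single (0 + n - j) (1 * b * lam ^ j))
      = u.sum Finsupp.single := Finsupp.sum_congr (fun n hn => this n hn (u n))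
    _ = u := Finsupp.sum_single u

lemma zmul_one (u : ℕ →₀ K) : zmul lam u (Finsupp.single 0 1) = u := by
  rw [zmul_comm lam u _, one_zmul]

end Kpart
end RBX
namespace RBX
section Kpart2
open Finset
variable {K : Type*} [CommRing K] (lam : K)

lemma zmul_single_smul (s : ℕ) (x : K) (v : ℕ →₀ K) :
    zmul lam (Finsupp.single s x) v = x • zmul lam (Finsupp.single s 1) v := by
  rw [single_eq s x, smul_zmul]

lemma lhs_eq (m n p : ℕ) :
    zmul lam (zmul lam (Finsupp.single m (1 : K)) (Finsupp.single n 1)) (Finsupp.single p 1)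
      = ∑ j ∈ range (m + 1), ∑ i ∈ range (m + n - j + 1),
          (Tc m n j * Tc (m + n - j) p i) • Finsupp.single (m + n + p - (j + i)) (lam ^ (j + i)) := by
  rw [zmul_single_one, zmul_finset_sum]
  refine Finset.sum_congr rfl fun j hj => ?_
  rw [nsmul_zmul, zmul_single_smul, zmul_single_one, Finset.smul_sum, Finset.smul_sum]
  refine Finset.sum_congr rfl fun i hi => ?_
  simp only [mem_range] at hj hi
  rw [smul_comm (lam ^ j) (Tc (m + n - j) p i), Finsupp.smul_single, smul_eq_mul, ← pow_add,
    smul_smul, show m + n - j + p - i = m + n + p - (j + i) by omega]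

lemma rhs_eq (m n p : ℕ) :
    zmul lam (Finsupp.single m (1 : K)) (zmul lam (Finsupp.single n 1) (Finsupp.single p 1))
      = ∑ j ∈ range (n + 1), ∑ i ∈ range (m + 1),
          (Tc n p j * Tc m (n + p - j) i) • Finsupp.single (m + n + p - (j + i)) (lam ^ (j + i)) := by
  rw [zmul_single_one lam n p, zmul_finset_sum']
  refine Finset.sum_congr rfl fun j hj => ?_
  rw [zmul_nsmul, single_eq (n + p - j) (lam ^ j), zmul_smul, zmul_single_one,
    Finset.smul_sum, Finset.smul_sum]
  refine Finset.sum_congr rfl fun i hi => ?_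
  simp only [mem_range] at hj hi
  rw [smul_comm (lam ^ j) (Tc m (n + p - j) i), Finsupp.smul_single, smul_eq_mul, ← pow_add,
    smul_smul, show m + (n + p - j) - i = m + n + p - (j + i) by omega]

lemma assoc_single (m n p : ℕ) :
    zmul lam (zmul lam (Finsupp.single m (1 : K)) (Finsupp.single n 1)) (Finsupp.single p 1)
      = zmul lam (Finsupp.single m (1 : K))
          (zmul lam (Finsupp.single n 1) (Finsupp.single p 1)) := by
  refine (lhs_eq lam m n p).trans (Eq.trans
    (HL m n p (fun k => Finsupp.single (m + n + p - k) (lam ^ k))) ?_)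
  refine Eq.trans ?_ ((HR m n p (fun k => Finsupp.single (m + n + p - k) (lam ^ k))).symm.trans
    (rhs_eq lam m n p).symm)
  refine Finset.sum_congr rfl fun k hk => ?_
  rw [coeffId m n p k (by simp at hk; omega)]

lemma zmul_assoc (u v w : ℕ →₀ K) :
    zmul lam (zmul lam u v) w = zmul lam u (zmul lam v w) := by
  induction u using Finsupp.induction_linear with
  | zero => simp [zero_zmul]
  | add f g hf hg => simp only [add_zmul, zmul_add, hf, hg]
  | single a x =>
    induction v using Finsupp.induction_linear with
    | zero => simp [zero_zmul, zmul_zero]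
    | add f g hf hg => simp only [add_zmul, zmul_add, hf, hg]
    | single b y =>
      induction w using Finsupp.induction_linear with
      | zero => simp [zmul_zero]
      | add f g hf hg => simp only [add_zmul, zmul_add, hf, hg]
      | single c z =>
        rw [single_eq a x, single_eq b y, single_eq c z]
        simp only [smul_zmul, zmul_smul]
        rw [assoc_single]

lemma shiftP_zero : shiftP (0 : ℕ →₀ K) = 0 := Finsupp.mapDomain_zero

lemma shiftP_add (u v : ℕ →₀ K) : shiftP (u + v) = shiftP u + shiftP v :=
  Finsupp.mapDomain_add

lemma shiftP_smul (c : K) (u : ℕ →₀ K) : shiftP (c • u) = c • shiftP u :=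
  Finsupp.mapDomain_smul c u

lemma shiftP_nsmul (k : ℕ) (u : ℕ →₀ K) : shiftP (k • u) = k • shiftP u :=
  Finsupp.mapDomain_smul k u

lemma shiftP_single (a : ℕ) (x : K) : shiftP (Finsupp.single a x) = Finsupp.single (a + 1) x :=
  Finsupp.mapDomain_single

lemma shiftP_sum {ι : Type*} (s : Finset ι) (f : ι → ℕ →₀ K) :
    shiftP (∑ i ∈ s, f i) = ∑ i ∈ s, shiftP (f i) :=
  Finsupp.mapDomain_finset_sum

lemma rb_single (m n : ℕ) :
    zmul lam (Finsupp.single (m + 1) (1 : K)) (Finsupp.single (n + 1) 1)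
      = shiftP (zmul lam (Finsupp.single (m + 1) 1) (Finsupp.single n 1))
        + shiftP (zmul lam (Finsupp.single m 1) (Finsupp.single (n + 1) 1))
        + lam • shiftP (zmul lam (Finsupp.single m 1) (Finsupp.single n 1)) := by
  rw [zmul_single_one, zmul_single_one, zmul_single_one, zmul_single_one,
    shiftP_sum, shiftP_sum, shiftP_sum]
  simp only [shiftP_nsmul, shiftP_single]
  -- normalize all four sums to the common shape  `c j • single (m+n+2-j) (lam^j)`
  have e0 : ∑ j ∈ range (m + 1 + 1), Tc (m + 1) (n + 1) j •
        Finsupp.single (m + 1 + (n + 1) - j) ((lam : K) ^ j)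
      = ∑ j ∈ range (m + 2), Tc (m + 1) (n + 1) j •
        Finsupp.single (m + n + 2 - j) (lam ^ j) :=
    Finset.sum_congr rfl fun j hj => by
      rw [show m + 1 + (n + 1) - j = m + n + 2 - j by simp at hj; omega]
  have e1 : ∑ j ∈ range (m + 1 + 1), Tc (m + 1) n j •
        Finsupp.single (m + 1 + n - j + 1) ((lam : K) ^ j)
      = ∑ j ∈ range (m + 2), Tc (m + 1) n j •
        Finsupp.single (m + n + 2 - j) (lam ^ j) :=
    Finset.sum_congr rfl fun j hj => by
      rw [show m + 1 + n - j + 1 = m + n + 2 - j by simp at hj; omega]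
  have e2 : ∑ j ∈ range (m + 1), Tc m (n + 1) j •
        Finsupp.single (m + (n + 1) - j + 1) ((lam : K) ^ j)
      = ∑ j ∈ range (m + 2), Tc m (n + 1) j •
        Finsupp.single (m + n + 2 - j) (lam ^ j) := by
    rw [Finset.sum_subset (Finset.range_subset_range.2 (show m + 1 ≤ m + 2 by omega))
      (fun j _ hj => by rw [Tzero (n + 1) (show m < j by simp at hj; omega), zero_smul])]
    exact Finset.sum_congr rfl fun j hj => by
      rw [show m + (n + 1) - j + 1 = m + n + 2 - j by simp at hj; omega]
  have e3 : lam • ∑ j ∈ range (m + 1), Tc m n j •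
        Finsupp.single (m + n - j + 1) ((lam : K) ^ j)
      = ∑ j ∈ range (m + 1), Tc m n j •
        Finsupp.single (m + n + 2 - (j + 1)) (lam ^ (j + 1)) := by
    rw [Finset.smul_sum]
    refine Finset.sum_congr rfl fun j hj => ?_
    rw [smul_comm lam (Tc m n j), Finsupp.smul_single, smul_eq_mul, ← pow_succ',
      show m + n - j + 1 = m + n + 2 - (j + 1) by simp at hj; omega]
  rw [e0, e1, e2, e3, ← Finset.sum_add_distrib]
  rw [Finset.sum_range_succ' (fun j => Tc (m + 1) (n + 1) j •
        Finsupp.single (m + n + 2 - j) (lam ^ j)) (m + 1),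
      Finset.sum_range_succ' (fun j => (Tc (m + 1) n j •
        Finsupp.single (m + n + 2 - j) (lam ^ j) + Tc m (n + 1) j •
        Finsupp.single (m + n + 2 - j) (lam ^ j))) (m + 1)]
  have hzero : Tc (m + 1) (n + 1) 0 • Finsupp.single (m + n + 2 - 0) ((lam : K) ^ 0)
      = Tc (m + 1) n 0 • Finsupp.single (m + n + 2 - 0) (lam ^ 0)
        + Tc m (n + 1) 0 • Finsupp.single (m + n + 2 - 0) (lam ^ 0) := by
    rw [← add_smul, Trec0]
  have hstep : ∑ j ∈ range (m + 1), Tc (m + 1) (n + 1) (j + 1) •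
        Finsupp.single (m + n + 2 - (j + 1)) ((lam : K) ^ (j + 1))
      = ∑ j ∈ range (m + 1), ((Tc (m + 1) n (j + 1) •
          Finsupp.single (m + n + 2 - (j + 1)) (lam ^ (j + 1)) + Tc m (n + 1) (j + 1) •
          Finsupp.single (m + n + 2 - (j + 1)) (lam ^ (j + 1)))
        + Tc m n j • Finsupp.single (m + n + 2 - (j + 1)) (lam ^ (j + 1))) := by
    refine Finset.sum_congr rfl fun j hj => ?_
    rw [← add_smul, ← add_smul, Trec m n j (by simp at hj; omega)]
  rw [hzero, hstep, Finset.sum_add_distrib]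
  abel

lemma rb (u v : ℕ →₀ K) :
    zmul lam (shiftP u) (shiftP v)
      = shiftP (zmul lam (shiftP u) v) + shiftP (zmul lam u (shiftP v))
        + lam • shiftP (zmul lam u v) := by
  induction u using Finsupp.induction_linear with
  | zero => simp [shiftP_zero, zero_zmul, zmul_zero]
  | add f g hf hg =>
    simp only [shiftP_add, add_zmul, zmul_add, hf, hg, smul_add]
    abel
  | single a x =>
    induction v using Finsupp.induction_linear with
    | zero => simp [shiftP_zero, zmul_zero]
    | add f g hf hg =>
      simp only [shiftP_add, add_zmul, zmul_add, hf, hg, smul_add]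
      abel
    | single b y =>
      rw [single_eq a x, single_eq b y]
      simp only [shiftP_smul, smul_zmul, zmul_smul, shiftP_single]
      rw [rb_single lam a b]
      simp only [smul_add, smul_comm x lam, smul_comm y lam]
end Kpart2
end RBX

/-- A = ⊕ K z_i with the above product is a commutative K-algebra with identity z_0,
and P(z_i) = z_{i+1} is a Rota-Baxter operator of weight λ on A. -/
theorem stmt4 {K : Type*} [CommRing K] (lam : K) :
    (∀ m n : ℕ, zmul lam (Finsupp.single m (1 : K)) (Finsupp.single n (1 : K))
      = ∑ j ∈ range (m + 1),
          ((m + n - j).choose n * n.choose j) • Finsupp.single (m + n - j) (lam ^ j)) ∧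
    (∀ u v : ℕ →₀ K, zmul lam u v = zmul lam v u) ∧
    (∀ u v w : ℕ →₀ K, zmul lam (zmul lam u v) w = zmul lam u (zmul lam v w)) ∧
    (∀ u v w : ℕ →₀ K, zmul lam u (v + w) = zmul lam u v + zmul lam u w) ∧
    (∀ u v w : ℕ →₀ K, zmul lam (u + v) w = zmul lam u w + zmul lam v w) ∧
    (∀ (c : K) (u v : ℕ →₀ K), zmul lam (c • u) v = c • zmul lam u v) ∧
    (∀ (c : K) (u v : ℕ →₀ K), zmul lam u (c • v) = c • zmul lam u v) ∧
    (∀ u : ℕ →₀ K, zmul lam (Finsupp.single 0 (1 : K)) u = u) ∧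
    (∀ u : ℕ →₀ K, zmul lam u (Finsupp.single 0 (1 : K)) = u) ∧
    (∀ u v : ℕ →₀ K,
      zmul lam (shiftP u) (shiftP v)
        = shiftP (zmul lam (shiftP u) v) + shiftP (zmul lam u (shiftP v))
          + lam • shiftP (zmul lam u v)) := by
  exact ⟨fun m n => RBX.zmul_single_one lam m n, RBX.zmul_comm lam, RBX.zmul_assoc lam,
    RBX.zmul_add lam, RBX.add_zmul lam, RBX.smul_zmul lam, RBX.zmul_smul lam,
    RBX.one_zmul lam, RBX.zmul_one lam, RBX.rb lam⟩
end

section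
/- In the algebra A = ⊕_{i∈ℕ} k z_i with product z_m z_n = Σ_{j=0}^{m} C(m+n-j, n) C(n, j) λ^j z_{m+n-j}, for each m ∈ ℕ₊ the submodule I_m = ⊕_{i ≥ m} k z_i is an ideal of A satisfying A·I_m ⊆ I_m and P(I_m) ⊆ I_m, where P(z_i) = z_{i+1}. Hence A/I_m with the induced operator is a Rota-Baxter algebra of weight λ. -/
open Finset

section Aux
variable {K : Type*} [CommRing K] (lam : K)

lemma zmul_zero_left (v : ℕ →₀ K) : zmul lam 0 v = 0 := by simp [zmul]

lemma zmul_zero_right (u : ℕ →₀ K) : zmul lam u 0 = 0 := by simp [zmul]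

lemma zmul_add_left (u1 u2 v : ℕ →₀ K) :
    zmul lam (u1 + u2) v = zmul lam u1 v + zmul lam u2 v := by
  unfold zmul
  apply Finsupp.sum_add_index' <;> intros <;>
    simp [Finsupp.sum, add_mul, Finsupp.single_add, smul_add, Finset.sum_add_distrib]

lemma zmul_add_right (u v1 v2 : ℕ →₀ K) :
    zmul lam u (v1 + v2) = zmul lam u v1 + zmul lam u v2 := by
  unfold zmul
  rw [← Finsupp.sum_add]
  refine Finsupp.sum_congr fun m _ => ?_
  apply Finsupp.sum_add_index' <;> intros <;>
    simp [mul_add, add_mul, Finsupp.single_add, smul_add, Finset.sum_add_distrib]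

lemma zmul_single_single (p q : ℕ) (a b : K) :
    zmul lam (Finsupp.single p a) (Finsupp.single q b)
      = ∑ j ∈ range (p + 1),
          ((p + q - j).choose q * q.choose j) • Finsupp.single (p + q - j) (a * b * lam ^ j) := by
  unfold zmul
  rw [Finsupp.sum_single_index, Finsupp.sum_single_index] <;> simp

lemma shiftP_zero : shiftP (0 : ℕ →₀ K) = 0 := by simp [shiftP]

lemma shiftP_add (u v : ℕ →₀ K) : shiftP (u + v) = shiftP u + shiftP v := by
  simp [shiftP, Finsupp.mapDomain_add]

lemma shiftP_single (p : ℕ) (a : K) : shiftP (Finsupp.single p a) = Finsupp.single (p+1) a := by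
  simp [shiftP, Finsupp.mapDomain_single]

lemma shiftP_sum {s : Finset ℕ} (f : ℕ → (ℕ →₀ K)) :
    shiftP (∑ j ∈ s, f j) = ∑ j ∈ s, shiftP (f j) := by
  simp [shiftP, Finsupp.mapDomain_finset_sum]

lemma shiftP_nsmul (n : ℕ) (u : ℕ →₀ K) : shiftP (n • u) = n • shiftP u := by
  simp [shiftP, Finsupp.mapDomain_smul]

lemma key_nat (D q j : ℕ) :
    (D+1).choose (q+1) * (q+1).choose j
      = D.choose q * q.choose j + D.choose (q+1) * (q+1).choose j
        + D.choose q * ((q+1).choose j - q.choose j) := by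
  cases j with
  | zero => simp [Nat.choose_succ_succ]
  | succ j =>
      rw [Nat.choose_succ_succ q j, Nat.add_sub_cancel, Nat.choose_succ_succ D q]
      ring

lemma rb_single (p q : ℕ) (a b : K) :
    zmul lam (Finsupp.single (p+1) a) (Finsupp.single (q+1) b)
      = shiftP (zmul lam (Finsupp.single (p+1) a) (Finsupp.single q b))
        + shiftP (zmul lam (Finsupp.single p a) (Finsupp.single (q+1) b))
        + lam • shiftP (zmul lam (Finsupp.single p a) (Finsupp.single q b)) := by
  rw [zmul_single_single, zmul_single_single, zmul_single_single, zmul_single_single,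
    shiftP_sum, shiftP_sum, shiftP_sum, Finset.smul_sum]
  simp only [shiftP_nsmul, shiftP_single]
  have hL : (∑ j ∈ range (p+1+1),
        ((p+1+(q+1)-j).choose (q+1) * (q+1).choose j) •
          Finsupp.single (p+1+(q+1)-j) (a*b*lam^j))
      = ∑ j ∈ range (p+2),
          ((p+q+2-j).choose (q+1) * (q+1).choose j) •
            Finsupp.single (p+q+2-j) (a*b*lam^j) := by
    apply Finset.sum_congr (by norm_num)
    intro j hj
    have : p+1+(q+1)-j = p+q+2-j := by omega
    rw [this]
  have hR1 : (∑ j ∈ range (p+1+1),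
        ((p+1+q-j).choose q * q.choose j) • Finsupp.single (p+1+q-j+1) (a*b*lam^j))
      = ∑ j ∈ range (p+2),
          ((p+q+1-j).choose q * q.choose j) • Finsupp.single (p+q+2-j) (a*b*lam^j) := by
    apply Finset.sum_congr (by norm_num)
    intro j hj
    have hj' : j < p + 2 := mem_range.mp hj
    have h1 : p+1+q-j = p+q+1-j := by omega
    rw [h1, show p+q+1-j+1 = p+q+2-j from by omega]
  have hR2 : (∑ j ∈ range (p+1),
        ((p+(q+1)-j).choose (q+1) * (q+1).choose j) •
          Finsupp.single (p+(q+1)-j+1) (a*b*lam^j))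
      = ∑ j ∈ range (p+2),
          ((p+q+1-j).choose (q+1) * (q+1).choose j) •
            Finsupp.single (p+q+2-j) (a*b*lam^j) := by
    conv_rhs => rw [Finset.sum_range_succ]
    have hz : ((p+q+1-(p+1)).choose (q+1) * (q+1).choose (p+1)) •
        Finsupp.single (p+q+2-(p+1)) (a*b*lam^(p+1)) = 0 := by
      have : p+q+1-(p+1) = q := by omega
      rw [this, Nat.choose_eq_zero_of_lt (Nat.lt_succ_self q)]
      simp
    rw [hz, add_zero]
    apply Finset.sum_congr rfl
    intro j hj
    have hj' : j < p + 1 := mem_range.mp hj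
    have h1 : p+(q+1)-j = p+q+1-j := by omega
    rw [h1, show p+q+1-j+1 = p+q+2-j from by omega]
  have hR3 : (∑ j ∈ range (p+1),
        lam • (((p+q-j).choose q * q.choose j) • Finsupp.single (p+q-j+1) (a*b*lam^j)))
      = ∑ j ∈ range (p+2),
          ((p+q+1-j).choose q * ((q+1).choose j - q.choose j)) •
            Finsupp.single (p+q+2-j) (a*b*lam^j) := by
    conv_rhs => rw [Finset.sum_range_succ']
    have hz : ((p+q+1-0).choose q * ((q+1).choose 0 - q.choose 0)) •
        Finsupp.single (p+q+2-0) (a*b*lam^0) = 0 := by simp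
    rw [hz, add_zero]
    apply Finset.sum_congr rfl
    intro j hj
    have hj' : j < p + 1 := mem_range.mp hj
    have h1 : p+q+1-(j+1) = p+q-j := by omega
    have h2 : p+q+2-(j+1) = p+q-j+1 := by omega
    have h3 : (q+1).choose (j+1) - q.choose (j+1) = q.choose j := by
      rw [Nat.choose_succ_succ q j, Nat.add_sub_cancel]
    rw [h1, h2, h3, smul_comm, Finsupp.smul_single']
    congr 1
    ring
  rw [hL, hR1, hR2, hR3, ← Finset.sum_add_distrib, ← Finset.sum_add_distrib]
  apply Finset.sum_congr rfl
  intro j hj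
  have hD : p+q+2-j = (p+q+1-j)+1 := by
    have := mem_range.mp hj; omega
  rw [hD, key_nat (p+q+1-j) q j, add_smul, add_smul]

lemma rb_base (p : ℕ) (a : K) (v : ℕ →₀ K) :
    zmul lam (Finsupp.single (p+1) a) (shiftP v)
      = shiftP (zmul lam (Finsupp.single (p+1) a) v)
        + shiftP (zmul lam (Finsupp.single p a) (shiftP v))
        + lam • shiftP (zmul lam (Finsupp.single p a) v) := by
  induction v using Finsupp.induction with
  | zero => simp [shiftP_zero, zmul_zero_right]
  | single_add q b g hqg hb ih =>
      simp only [shiftP_add, zmul_add_right, shiftP_single, smul_add]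
      rw [rb_single, ih]
      abel

lemma rb_full (u v : ℕ →₀ K) :
    zmul lam (shiftP u) (shiftP v)
      = shiftP (zmul lam (shiftP u) v) + shiftP (zmul lam u (shiftP v))
        + lam • shiftP (zmul lam u v) := by
  induction u using Finsupp.induction with
  | zero => simp [shiftP_zero, zmul_zero_left]
  | single_add p a f hpf ha ih =>
      simp only [shiftP_add, zmul_add_left, shiftP_single, smul_add]
      rw [rb_base, ih]
      abel

end Aux

/-- I_m = ⊕_{i ≥ m} K z_i (described by: all coefficients below m vanish) is an ideal
of A closed under P; hence the Rota-Baxter identity of weight λ holds modulo I_m. -/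
theorem stmt6 {K : Type*} [CommRing K] (lam : K) (m : ℕ) (hm : 1 ≤ m) :
    (∀ u v : ℕ →₀ K, (∀ i, i < m → v i = 0) → ∀ i, i < m → zmul lam u v i = 0) ∧
    (∀ v : ℕ →₀ K, (∀ i, i < m → v i = 0) → ∀ i, i < m → shiftP v i = 0) ∧
    (∀ u v : ℕ →₀ K, ∀ i, i < m →
      zmul lam (shiftP u) (shiftP v) i
        = (shiftP (zmul lam (shiftP u) v) + shiftP (zmul lam u (shiftP v))
            + lam • shiftP (zmul lam u v)) i) := by
  refine ⟨?_, ?_, ?_⟩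
  · intro u v hv i him
    rw [zmul, Finsupp.sum_apply]
    apply Finset.sum_eq_zero
    intro m' hm'
    dsimp only
    rw [Finsupp.sum_apply]
    apply Finset.sum_eq_zero
    intro n hn
    dsimp only
    rw [Finset.sum_apply']
    apply Finset.sum_eq_zero
    intro j hj
    have hnm : m ≤ n := by
      by_contra h
      exact (Finsupp.mem_support_iff.mp hn) (hv n (not_le.mp h))
    have hne : m' + n - j ≠ i := by
      have := mem_range.mp hj; omega
    simp [Finsupp.single_apply, hne]
  · intro v hv i him
    rcases i with _ | i
    · exact Finsupp.mapDomain_notin_range _ _ (by simp)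
    · rw [shiftP, Finsupp.mapDomain_apply (add_left_injective 1)]
      exact hv i (by omega)
  · intro u v i _
    rw [rb_full]
end

section
/- Let Q be a k-linear operator on a commutative k-algebra R, and let φ, ψ ∈ k[x]. Then there is a unique k-linear operator Q̃ on R^ℕ such that Q̃(f)_0 = Q(f_0) for all f ∈ R^ℕ and ∂Q̃ = φ(∂) + Q̃ψ(∂), where ∂ is the shift operator ∂(f)_n = f_{n+1}. Explicitly, Q̃ is determined by the recursion Q̃(f)_{n+1} = (φ(∂)f)_n + Q̃(ψ(∂)f)_n. -/
open Finset

/-- For p ∈ K[x], the operator p(∂) on sequences, where ∂ is the shift: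
(p(∂)f)_n = Σ_i p_i f_{n+i}. -/
noncomputable def polyShift {K R : Type*} [CommRing K] [CommRing R] [Algebra K R]
    (p : Polynomial K) (f : ℕ → R) : ℕ → R :=
  fun n => ∑ i ∈ range (p.natDegree + 1), p.coeff i • f (n + i)

lemma polyShift_add {K R : Type*} [CommRing K] [CommRing R] [Algebra K R]
    (p : Polynomial K) (f g : ℕ → R) :
    polyShift p (f + g) = polyShift p f + polyShift p g := by
  funext n
  simp [polyShift, smul_add, Finset.sum_add_distrib]

lemma polyShift_smul {K R : Type*} [CommRing K] [CommRing R] [Algebra K R]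
    (p : Polynomial K) (c : K) (f : ℕ → R) :
    polyShift p (c • f) = c • polyShift p f := by
  funext n
  simp [polyShift, Finset.smul_sum, smul_comm c]

noncomputable def Taux {K R : Type*} [CommRing K] [CommRing R] [Algebra K R]
    (Q : R →ₗ[K] R) (φ ψ : Polynomial K) : ℕ → (ℕ → R) → R
  | 0, f => Q (f 0)
  | (n + 1), f => polyShift φ f n + Taux Q φ ψ n (polyShift ψ f)

/-- Given a K-linear operator Q on R and φ, ψ ∈ K[x], there is a unique K-linear
operator Q̃ on R^ℕ covering Q (i.e. Q̃(f)_0 = Q(f_0)) and satisfying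
∂Q̃ = φ(∂) + Q̃ψ(∂), i.e. the recursion Q̃(f)_{n+1} = (φ(∂)f)_n + Q̃(ψ(∂)f)_n. -/
theorem stmt9 {K R : Type*} [CommRing K] [CommRing R] [Algebra K R]
    (Q : R →ₗ[K] R) (φ ψ : Polynomial K) :
    ∃! Qt : (ℕ → R) →ₗ[K] (ℕ → R),
      (∀ f : ℕ → R, Qt f 0 = Q (f 0)) ∧
      (∀ (f : ℕ → R) (n : ℕ), Qt f (n + 1) = polyShift φ f n + Qt (polyShift ψ f) n) := by
  have hadd : ∀ (n : ℕ) (f g : ℕ → R),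
      Taux Q φ ψ n (f + g) = Taux Q φ ψ n f + Taux Q φ ψ n g := by
    intro n
    induction n with
    | zero => intro f g; simp [Taux]
    | succ n ih =>
      intro f g
      simp only [Taux, polyShift_add, ih, Pi.add_apply]
      ring
  have hsmul : ∀ (n : ℕ) (c : K) (f : ℕ → R),
      Taux Q φ ψ n (c • f) = c • Taux Q φ ψ n f := by
    intro n
    induction n with
    | zero => intro c f; simp [Taux]
    | succ n ih =>
      intro c f
      simp only [Taux, polyShift_smul, ih, Pi.smul_apply, smul_add]
  refine ⟨⟨⟨fun f n => Taux Q φ ψ n f, ?_⟩, ?_⟩, ⟨?_, ?_⟩, ?_⟩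
  · intro f g; funext n; exact hadd n f g
  · intro c f; funext n; exact hsmul n c f
  · intro f; rfl
  · intro f n; rfl
  · rintro Qt ⟨h0, hrec⟩
    ext f n
    induction n generalizing f with
    | zero => exact h0 f
    | succ n ih => rw [hrec f n, ih (polyShift ψ f)]; rfl
end

section
/- Let (R, P) be a Rota-Baxter algebra of weight λ ∈ k, and define the operator P̃ on the λ-Hurwitz series algebra R^ℕ by P̃(f)_n = P(f_n) for all n ∈ ℕ (applying P componentwise). Then P̃ is a Rota-Baxter operator of weight λ on R^ℕ, and it satisfies the commutation relation ∂P̃ = P̃∂ with the shift operator ∂. -/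
open Finset

/-- The shift operator ∂(f)_n = f_{n+1}. -/
def der {R : Type*} (f : ℕ → R) : ℕ → R := fun n => f (n + 1)

/-- The componentwise application of P to a sequence. -/
def compwise {R : Type*} (P : R → R) (f : ℕ → R) : ℕ → R := fun n => P (f n)

/-- If (R,P) is a Rota-Baxter algebra of weight λ, then the componentwise operator
P̃(f)_n = P(f_n) is a Rota-Baxter operator of weight λ on the λ-Hurwitz series
algebra, and ∂P̃ = P̃∂. -/
theorem stmt10 {K R : Type*} [CommRing K] [CommRing R] [Algebra K R] (lam : K)
    (P : R →ₗ[K] R)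
    (hP : ∀ x y : R, P x * P y = P (P x * y) + P (x * P y) + lam • P (x * y)) :
    (∀ f g : ℕ → R,
      hmul lam (compwise P f) (compwise P g)
        = compwise P (hmul lam (compwise P f) g) + compwise P (hmul lam f (compwise P g))
          + lam • compwise P (hmul lam f g)) ∧
    (∀ f : ℕ → R, der (compwise P f) = compwise P (der f)) := by
  constructor
  · intro f g
    funext n
    simp only [hmul, compwise, Pi.add_apply, Pi.smul_apply, map_sum, Finset.smul_sum,
      ← Finset.sum_add_distrib]
    refine Finset.sum_congr rfl fun i _ => Finset.sum_congr rfl fun j _ => ?_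
    rw [map_nsmul, map_nsmul, map_nsmul, map_smul, map_smul, map_smul, hP]
    rw [smul_add, smul_add, smul_add, smul_add]
    congr 1
    rw [smul_comm (lam ^ i) lam, smul_comm (((n.choose i * (n-i).choose j) : ℕ)) lam]
  · intro f
    funext n
    rfl
end

section
/- Let (R, P) be a Rota-Baxter algebra of weight 0 and a_0 ∈ k. Define P̃ : R^ℕ → R^ℕ by P̃(f) = (P(f_0), a_0 f_0, a_0 f_1, a_0 f_2, ...). Then P̃ is a Rota-Baxter operator of weight 0 on the weight-0 Hurwitz series algebra R^ℕ, i.e., P̃(f)P̃(g) = P̃(P̃(f)g) + P̃(fP̃(g)) for all f, g ∈ R^ℕ. -/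
open Finset

/-- The weight-0 Hurwitz product on sequences. -/
def hmul0 {K R : Type*} [CommRing K] [CommRing R] [Algebra K R] (f g : ℕ → R) : ℕ → R :=
  fun n => ∑ j ∈ range (n + 1), n.choose j • (f (n - j) * g j)

/-- The cover P̃(f) = (P(f_0), a_0 f_0, a_0 f_1, a_0 f_2, ...). -/
def cov {K R : Type*} [CommRing K] [CommRing R] [Algebra K R]
    (P : R → R) (a0 : K) (f : ℕ → R) : ℕ → R :=
  fun n => if n = 0 then P (f 0) else a0 • f (n - 1)

/-- If (R,P) is a Rota-Baxter algebra of weight 0 and a_0 ∈ K, then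
P̃(f) = (P(f_0), a_0 f_0, a_0 f_1, ...) is a Rota-Baxter operator of weight 0 on
the weight-0 Hurwitz series algebra R^ℕ. -/
theorem stmt11 {K R : Type*} [CommRing K] [CommRing R] [Algebra K R]
    (P : R →ₗ[K] R) (a0 : K)
    (hP : ∀ x y : R, P x * P y = P (P x * y) + P (x * P y)) :
    ∀ f g : ℕ → R,
      hmul0 (K := K) (cov (K := K) P a0 f) (cov (K := K) P a0 g)
        = cov (K := K) P a0 (hmul0 (K := K) (cov (K := K) P a0 f) g)
          + cov (K := K) P a0 (hmul0 (K := K) f (cov (K := K) P a0 g)) := by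
  intro f g
  funext n
  cases n with
  | zero =>
    simp [hmul0, cov, hP]
  | succ m =>
    show ∑ j ∈ range (m + 1 + 1), (m+1).choose j • (cov (K := K) P a0 f (m+1-j) * cov (K := K) P a0 g j) = _
    simp only [cov, Pi.add_apply, Nat.succ_ne_zero, if_false, Nat.add_sub_cancel, hmul0]
    rw [Finset.sum_range_succ, Finset.sum_range_succ']
    rw [Finset.sum_range_succ (n := m), Finset.sum_range_succ' (n := m)]
    rw [smul_add, smul_add]
    have key : ∑ k ∈ range m, (m + 1).choose (k + 1) •
          ((if m + 1 - (k + 1) = 0 then P (f 0) else a0 • f (m + 1 - (k + 1) - 1)) *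
            if k + 1 = 0 then P (g 0) else a0 • g (k + 1 - 1))
        = a0 • ∑ x ∈ range m, m.choose x • ((if m - x = 0 then P (f 0) else a0 • f (m - x - 1)) * g x)
          + a0 • ∑ k ∈ range m, m.choose (k + 1) •
              (f (m - (k + 1)) * if k + 1 = 0 then P (g 0) else a0 • g (k + 1 - 1)) := by
      rw [Finset.smul_sum, Finset.smul_sum, ← Finset.sum_add_distrib]
      refine Finset.sum_congr rfl fun k hk => ?_
      have hk' : k < m := Finset.mem_range.mp hk
      have h1 : m + 1 - (k + 1) ≠ 0 := by omega
      have h2 : m - k ≠ 0 := by omega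
      rw [if_neg h1, if_neg (Nat.succ_ne_zero k), if_neg h2]
      have he : m + 1 - (k + 1) - 1 = m - k - 1 := by omega
      have he2 : m - (k + 1) = m - k - 1 := by omega
      rw [he, he2, Nat.add_sub_cancel, Nat.choose_succ_succ, add_smul]
      congr 1
      · rw [mul_smul_comm, smul_comm]
      · rw [smul_mul_assoc, smul_comm]
    rw [key]
    simp only [Nat.sub_self, if_pos rfl, Nat.choose_self, Nat.choose_zero_right, one_smul,
      Nat.add_sub_cancel, if_neg (Nat.succ_ne_zero m), Nat.sub_zero]
    rw [smul_mul_assoc, mul_smul_comm]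
    abel
end

section
/- Let k be an integral domain of characteristic 0, λ ∈ k nonzero, a_0 ∈ k, and consider the Rota-Baxter algebra (R, P) where R = A/I_1 for A = ⊕ k z_i with product z_m z_n = Σ_{j=0}^{m} C(m+n-j,n)C(n,j)λ^j z_{m+n-j} and P induced by z_i ↦ z_{i+1} (so P = 0 on R ≅ k). Define P̃ on R^ℕ by P̃(f) = (P(f_0), a_0 f_0, a_0 f_1, ...). If P̃ is a Rota-Baxter operator of weight λ on the λ-Hurwitz series algebra R^ℕ, then a_0 = 0 or a_0 = 1. -/
open Finset

/-- The cover P̃(f) = (P(f_0), a_0 f_0, a_0 f_1, ...) for R = A/I₁ ≅ K with the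
zero Rota-Baxter operator P = 0. -/
def cov13 {K : Type*} [CommRing K] (a0 : K) (f : ℕ → K) : ℕ → K :=
  fun n => if n = 0 then 0 else a0 * f (n - 1)

/-- Over a domain K of characteristic 0 with λ ≠ 0, if the cover
P̃(f) = (0, a_0 f_0, a_0 f_1, ...) of the zero Rota-Baxter operator on R ≅ K is a
Rota-Baxter operator of weight λ on the λ-Hurwitz series algebra, then a_0 = 0 or a_0 = 1. -/
theorem stmt13 {K : Type*} [CommRing K] [IsDomain K] [CharZero K]
    (lam : K) (hlam : lam ≠ 0) (a0 : K)
    (hRB : ∀ f g : ℕ → K,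
      hmul lam (cov13 a0 f) (cov13 a0 g)
        = cov13 a0 (hmul lam (cov13 a0 f) g) + cov13 a0 (hmul lam f (cov13 a0 g))
          + lam • cov13 a0 (hmul lam f g)) :
    a0 = 0 ∨ a0 = 1 := by
  have h := congrFun (hRB (fun _ => 1) (fun _ => 1)) 1
  simp [hmul, cov13, Finset.sum_range_succ, Pi.add_apply, Pi.smul_apply, smul_eq_mul,
    mul_comm, mul_assoc, mul_left_comm] at h
  -- h should give lam * a0 ^ 2 = lam * a0 (up to form)
  rcases h with h | h
  · have h2 : a0 * (a0 - 1) = 0 := by ring_nf; linear_combination h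
    rcases mul_eq_zero.mp h2 with h3 | h3
    · exact Or.inl h3
    · exact Or.inr (by linear_combination h3)
  · exact absurd h hlam
end
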